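/- A map f : X → Y between metric spaces is a uniform embedding if and only if there exist a nondecreasing function ρ₋ : ℝ≥0 → ℝ≥0 with ρ₋(t) → ∞ as t → ∞, and constants K, L, such that ρ₋(d(x,y)) ≤ d(f(x),f(y)) ≤ K·d(x,y) + L for all x, y ∈ X. (Here X is assumed to be a metric space in which distances take values in a set closed under the relevant operations, e.g. a geodesic space or a graph with the path metric.) -/

import Mathlib

/-- `f` is a uniform embedding: a coarsely `(K,L)`-Lipschitz map such that for every
`E > 0` there is `D > 0` with: any `A ⊆ Y` of diameter `< E` has preimage of diameter `< D`. -/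
def IsUniformCoarseEmbedding {X Y : Type*} [PseudoMetricSpace X] [PseudoMetricSpace Y]
    (f : X → Y) : Prop :=
  (∃ K L : ℝ, ∀ x y : X, dist (f x) (f y) ≤ K * dist x y + L) ∧
  ∀ E : ℝ, 0 < E → ∃ D : ℝ, 0 < D ∧ ∀ A : Set Y,
    EMetric.diam A < ENNReal.ofReal E → EMetric.diam (f ⁻¹' A) < ENNReal.ofReal D

/-- `X` is a geodesic metric space: any two points are joined by a path whose length equals
their distance (expressed via an isometric parametrization of `[0, d(x,y)]`). -/
def IsGeodesicMetricSpace (X : Type*) [MetricSpace X] : Prop :=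
  ∀ x y : X, ∃ γ : ℝ → X, γ 0 = x ∧ γ (dist x y) = y ∧
    ∀ s ∈ Set.Icc (0 : ℝ) (dist x y), ∀ t ∈ Set.Icc (0 : ℝ) (dist x y),
      dist (γ s) (γ t) = |s - t|

/-- A map `f : X → Y` from a geodesic metric space is a uniform embedding iff there exist a
nondecreasing `ρ₋ : ℝ≥0 → ℝ≥0` with `ρ₋(t) → ∞`, and constants `K, L`, such that
`ρ₋(d(x,y)) ≤ d(f x, f y) ≤ K·d(x,y) + L` for all `x, y`. -/
theorem isUniformCoarseEmbedding_iff_exists_lower_control (X Y : Type)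
    [MetricSpace X] [MetricSpace Y] (hX : IsGeodesicMetricSpace X) (f : X → Y) :
    IsUniformCoarseEmbedding f ↔
      ∃ ρ : NNReal → NNReal, Monotone ρ ∧
        Filter.Tendsto ρ Filter.atTop Filter.atTop ∧
        ∃ K L : ℝ, ∀ x y : X,
          (ρ (nndist x y) : ℝ) ≤ dist (f x) (f y) ∧ dist (f x) (f y) ≤ K * dist x y + L := by
  constructor
  · rintro ⟨⟨K, L, hKL⟩, hU⟩
    -- Key consequence of the uniform embedding property:
    have key : ∀ E : ℝ, 0 < E → ∃ D : ℝ, 0 < D ∧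
        ∀ x y : X, D ≤ dist x y → E ≤ dist (f x) (f y) := by
      intro E hE
      obtain ⟨D, hD, hA⟩ := hU E hE
      refine ⟨D, hD, fun x y hxy => ?_⟩
      by_contra hlt
      push_neg at hlt
      have hdiam : EMetric.diam ({f x, f y} : Set Y) < ENNReal.ofReal E := by
        rw [show EMetric.diam ({f x, f y} : Set Y) = edist (f x) (f y) from EMetric.diam_pair,
          edist_dist]
        exact (ENNReal.ofReal_lt_ofReal_iff hE).2 hlt
      have h2 := hA _ hdiam
      have hx : x ∈ f ⁻¹' ({f x, f y} : Set Y) := by simp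
      have hy : y ∈ f ⁻¹' ({f x, f y} : Set Y) := by simp
      have hlt' : dist x y < D :=
        edist_lt_ofReal.1 ((EMetric.edist_le_diam_of_mem hx hy).trans_lt h2)
      exact absurd hxy (not_le.2 hlt')
    set I : NNReal → ENNReal :=
      fun t => ⨅ (x : X) (y : X) (_ : t ≤ nndist x y), edist (f x) (f y) with hI
    have hImono : Monotone I := by
      intro s t hst
      refine iInf_mono fun x => iInf_mono fun y => le_iInf fun h => ?_
      exact iInf_le _ (hst.trans h)
    refine ⟨fun t => (min (t : ENNReal) (I t)).toNNReal, ?_, ?_, K, L,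
      fun x y => ⟨?_, hKL x y⟩⟩
    · intro s t hst
      refine ENNReal.toNNReal_mono
        (ne_top_of_le_ne_top ENNReal.coe_ne_top (min_le_left _ _)) ?_
      exact min_le_min (by exact_mod_cast hst) (hImono hst)
    · rw [Filter.tendsto_atTop]
      intro b
      obtain ⟨D, hD0, hDb⟩ := key ((b : ℝ) + 1) (by positivity)
      rw [Filter.eventually_atTop]
      refine ⟨max b D.toNNReal, fun t ht => ?_⟩
      have htb : b ≤ t := le_trans (le_max_left _ _) ht
      have htD : D ≤ (t : ℝ) := by
        have h1 : D.toNNReal ≤ t := le_trans (le_max_right _ _) ht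
        calc D = (D.toNNReal : ℝ) := (Real.coe_toNNReal D hD0.le).symm
          _ ≤ t := by exact_mod_cast h1
      have hbI : (b : ENNReal) ≤ I t := by
        refine le_iInf fun x => le_iInf fun y => le_iInf fun h => ?_
        have hdxy : D ≤ dist x y := htD.trans (by rw [dist_nndist]; exact_mod_cast h)
        have hE := hDb x y hdxy
        rw [edist_dist]
        calc (b : ENNReal) = ENNReal.ofReal b := ENNReal.ofReal_coe_nnreal.symm
          _ ≤ ENNReal.ofReal (dist (f x) (f y)) := ENNReal.ofReal_le_ofReal (by linarith)
      have hmin : (b : ENNReal) ≤ min (t : ENNReal) (I t) :=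
        le_min (by exact_mod_cast htb) hbI
      have h2 := ENNReal.toNNReal_mono
        (ne_top_of_le_ne_top ENNReal.coe_ne_top (min_le_left _ _)) hmin
      simpa using h2
    · show ((min ((nndist x y : ENNReal)) (I (nndist x y))).toNNReal : ℝ) ≤ dist (f x) (f y)
      have h1 : min ((nndist x y : ENNReal)) (I (nndist x y)) ≤ edist (f x) (f y) := by
        refine (min_le_right _ _).trans ?_
        exact ((iInf_le _ x).trans ((iInf_le _ y).trans (iInf_le _ le_rfl)))
      have h2 := ENNReal.toNNReal_mono (edist_ne_top _ _) h1
      rw [edist_nndist, ENNReal.toNNReal_coe] at h2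
      rw [dist_nndist]
      exact_mod_cast h2
  · rintro ⟨ρ, hmono, htop, K, L, hb⟩
    refine ⟨⟨K, L, fun x y => (hb x y).2⟩, fun E hE => ?_⟩
    obtain ⟨T, hT⟩ := Filter.eventually_atTop.1 (Filter.tendsto_atTop.1 htop E.toNNReal)
    refine ⟨(T : ℝ) + 1, by positivity, fun A hA => ?_⟩
    have hdiam : EMetric.diam (f ⁻¹' A) ≤ ENNReal.ofReal T := by
      apply EMetric.diam_le
      intro x hx y hy
      have hd : dist (f x) (f y) < E :=
        edist_lt_ofReal.1 ((EMetric.edist_le_diam_of_mem (Set.mem_preimage.1 hx) (Set.mem_preimage.1 hy)).trans_lt hA)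
      have hlt : nndist x y < T := by
        by_contra hle
        push_neg at hle
        have h1 := hT _ hle
        have h2 := (hb x y).1
        have hEle : E ≤ dist (f x) (f y) := by
          calc E = (E.toNNReal : ℝ) := (Real.coe_toNNReal E hE.le).symm
            _ ≤ (ρ (nndist x y) : ℝ) := by exact_mod_cast h1
            _ ≤ _ := h2
        linarith
      have hdxy : dist x y < (T : ℝ) := by rw [dist_nndist]; exact_mod_cast hlt
      exact (edist_lt_ofReal.2 hdxy).le
    calc EMetric.diam (f ⁻¹' A) ≤ ENNReal.ofReal T := hdiam
      _ < ENNReal.ofReal ((T : ℝ) + 1) :=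
        (ENNReal.ofReal_lt_ofReal_iff (by positivity)).2 (lt_add_one _)
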